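/- arXiv:2204.13888 — 2 statements merged into one kernel-verified Lean document; each statement's English description precedes it below -/
import Mathlib

section
/- Let (X, d) be a complete metric space and let F be a finite nonempty set of maps f : X → X for which there exists λ ∈ (0,1) with d(f(x), f(y)) ≤ λ·d(x,y) for all x, y ∈ X and f ∈ F. Then there exists a unique nonempty compact subset C ⊆ X satisfying ⋃_{f ∈ F} f(C) = C. -/
open Metric EMetric Set TopologicalSpace

/-- Existence and uniqueness of the attractor of an iterated function system:
given a complete metric space `X` and a finite nonempty family `F` of maps
`f : X → X` admitting a common contraction factor `λ ∈ (0,1)`, there is a unique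
nonempty compact set `C ⊆ X` with `⋃_{f ∈ F} f(C) = C`. -/
theorem ifs_attractor_exists_unique {X : Type*} [MetricSpace X] [CompleteSpace X]
    [Nonempty X] (F : Finset (X → X)) (hF : F.Nonempty) (l : ℝ) (hl0 : 0 < l)
    (hl1 : l < 1) (hcontr : ∀ f ∈ F, ∀ x y : X, dist (f x) (f y) ≤ l * dist x y) :
    ∃! C : Set X, C.Nonempty ∧ IsCompact C ∧ (⋃ f ∈ F, f '' C) = C := by
  have hlip : ∀ f ∈ F, LipschitzWith ⟨l, hl0.le⟩ f := fun f hf =>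
    LipschitzWith.of_dist_le_mul (hcontr f hf)
  -- Hutchinson operator on nonempty compacts
  have hcompact : ∀ K : NonemptyCompacts X, IsCompact (⋃ f ∈ F, f '' (K : Set X)) :=
    fun K => F.finite_toSet.isCompact_biUnion fun f hf =>
      (K.isCompact.image (hlip f hf).continuous)
  have hne : ∀ K : NonemptyCompacts X, (⋃ f ∈ F, f '' (K : Set X)).Nonempty := by
    intro K
    obtain ⟨f, hf⟩ := hF
    obtain ⟨x, hx⟩ := K.nonempty
    exact ⟨f x, mem_biUnion hf ⟨x, hx, rfl⟩⟩
  set T : NonemptyCompacts X → NonemptyCompacts X :=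
    fun K => ⟨⟨⋃ f ∈ F, f '' (K : Set X), hcompact K⟩, hne K⟩ with hT
  have hTcarrier : ∀ K : NonemptyCompacts X, (T K : Set X) = ⋃ f ∈ F, f '' (K : Set X) :=
    fun K => rfl
  -- contraction estimate
  have hcon : ContractingWith ⟨l, hl0.le⟩ T := by
    constructor
    · exact_mod_cast hl1
    · apply LipschitzWith.of_dist_le_mul
      intro A B
      rw [NonemptyCompacts.dist_eq, NonemptyCompacts.dist_eq]
      have hfin : hausdorffEDist (A : Set X) (B : Set X) ≠ ⊤ :=
        Metric.hausdorffEdist_ne_top_of_nonempty_of_bounded A.nonempty B.nonempty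
          A.isCompact.isBounded B.isCompact.isBounded
      have hH : 0 ≤ hausdorffDist (A : Set X) (B : Set X) := hausdorffDist_nonneg
      push_cast
      apply hausdorffDist_le_of_mem_dist (by positivity)
      · intro x hx
        rw [hTcarrier] at hx
        obtain ⟨f, hf, a, ha, rfl⟩ := by simpa using hx
        obtain ⟨b, hb, hab⟩ := B.isCompact.exists_infDist_eq_dist B.nonempty a
        refine ⟨f b, ?_, ?_⟩
        · rw [hTcarrier]; exact mem_biUnion hf ⟨b, hb, rfl⟩
        · calc dist (f a) (f b) ≤ l * dist a b := hcontr f hf a b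
            _ ≤ l * hausdorffDist (A : Set X) (B : Set X) := by
                apply mul_le_mul_of_nonneg_left _ hl0.le
                rw [← hab]
                exact infDist_le_hausdorffDist_of_mem ha hfin
      · intro x hx
        rw [hTcarrier] at hx
        obtain ⟨f, hf, b, hb, rfl⟩ := by simpa using hx
        obtain ⟨a, ha, hab⟩ := A.isCompact.exists_infDist_eq_dist A.nonempty b
        refine ⟨f a, ?_, ?_⟩
        · rw [hTcarrier]; exact mem_biUnion hf ⟨a, ha, rfl⟩
        · calc dist (f b) (f a) ≤ l * dist b a := hcontr f hf b a
            _ ≤ l * hausdorffDist (A : Set X) (B : Set X) := by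
                apply mul_le_mul_of_nonneg_left _ hl0.le
                rw [← hab]
                rw [EMetric.hausdorffEdist_comm] at hfin
                rw [hausdorffDist_comm]
                exact infDist_le_hausdorffDist_of_mem hb hfin
  -- Banach fixed point
  haveI : Nonempty (NonemptyCompacts X) :=
    ⟨⟨⟨{Classical.arbitrary X}, isCompact_singleton⟩, Set.singleton_nonempty _⟩⟩
  obtain ⟨K, hK⟩ : ∃ K : NonemptyCompacts X, Function.IsFixedPt T K :=
    ⟨hcon.fixedPoint T, hcon.fixedPoint_isFixedPt⟩
  refine ⟨(K : Set X), ⟨K.nonempty, K.isCompact, ?_⟩, ?_⟩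
  · rw [← hTcarrier, hK]
  · rintro C ⟨hCne, hCcomp, hCfix⟩
    have : Function.IsFixedPt T ⟨⟨C, hCcomp⟩, hCne⟩ := by
      apply NonemptyCompacts.ext
      rw [hTcarrier]
      exact hCfix
    have := hcon.fixedPoint_unique' this hK
    exact congrArg (fun K : NonemptyCompacts X => (K : Set X)) this
end

section
/- Let (X̃, φ̃) and (X, φ) be dynamical systems given by homeomorphisms of compact metric spaces, and let π : X̃ → X be a continuous surjection satisfying π ∘ φ̃ = φ ∘ π. Assume (X̃, φ̃) is minimal (every orbit is dense) and that there exists a point x₀ ∈ X whose fibre π^{-1}(x₀) is a single point. Let g : X̃ → ℤ be a continuous function such that g − g∘φ̃^{-1} is constant on every fibre of π. Then g itself is constant on every fibre of π, i.e., there exists a continuous g₀ : X → ℤ with g = g₀ ∘ π. -/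
/-- Let `π : X̃ → X` be a continuous surjective semiconjugacy between homeomorphisms of
compact metric spaces, with `(X̃, φ̃)` minimal and some fibre of `π` a singleton.  If
`g : X̃ → ℤ` is continuous and `g − g ∘ φ̃⁻¹` is constant on every fibre of `π`, then
`g` itself is constant on every fibre, i.e. `g = g₀ ∘ π` for some continuous
`g₀ : X → ℤ`. -/
theorem cocycle_constant_on_fibres
    {Xt X : Type*} [MetricSpace Xt] [CompactSpace Xt] [MetricSpace X] [CompactSpace X]
    (φt : Xt ≃ₜ Xt) (φ : X ≃ₜ X) (π : Xt → X)
    (hcont : Continuous π) (hsurj : Function.Surjective π)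
    (hsemi : ∀ w : Xt, π (φt w) = φ (π w))
    (hmin : ∀ w : Xt, Dense {v : Xt | ∃ n : ℤ, (φt.toEquiv ^ n) w = v})
    (hsing : ∃ x₀ : X, ∃ w₀ : Xt, π ⁻¹' {x₀} = {w₀})
    (g : Xt → ℤ) (hg : Continuous g)
    (hcob : ∀ w w' : Xt, π w = π w' →
      g w - g (φt.symm w) = g w' - g (φt.symm w')) :
    ∃ g₀ : X → ℤ, Continuous g₀ ∧ g = g₀ ∘ π := by
  obtain ⟨x₀, w₀, hfib⟩ := hsing
  -- π intertwines the inverses as well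
  have hsemi' : ∀ w : Xt, π (φt.symm w) = φ.symm (π w) := by
    intro w
    apply φ.injective
    rw [φ.apply_symm_apply, ← hsemi, φt.apply_symm_apply]
  -- key: fibre relation is preserved by φt and φt.symm, and g-differences are constant
  have step : ∀ w w' : Xt, π w = π w' →
      (π (φt w) = π (φt w') ∧ g (φt w) - g (φt w') = g w - g w') := by
    intro w w' h
    have hπ : π (φt w) = π (φt w') := by rw [hsemi, hsemi, h]
    have := hcob (φt w) (φt w') hπ
    rw [φt.symm_apply_apply, φt.symm_apply_apply] at this
    constructor
    · exact hπ
    · omega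
  have step' : ∀ w w' : Xt, π w = π w' →
      (π (φt.symm w) = π (φt.symm w') ∧ g (φt.symm w) - g (φt.symm w') = g w - g w') := by
    intro w w' h
    have hπ : π (φt.symm w) = π (φt.symm w') := by rw [hsemi', hsemi', h]
    have := hcob w w' h
    exact ⟨hπ, by omega⟩
  -- iterate over ℤ
  have iter : ∀ (w w' : Xt), π w = π w' → ∀ n : ℤ,
      π ((φt.toEquiv ^ n) w) = π ((φt.toEquiv ^ n) w') ∧
      g ((φt.toEquiv ^ n) w) - g ((φt.toEquiv ^ n) w') = g w - g w' := by
    intro w w' h n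
    induction n using Int.induction_on with
    | zero => constructor <;> simp [h]
    | succ k ih =>
        have e : ∀ v : Xt, (φt.toEquiv ^ ((k : ℤ) + 1)) v = φt ((φt.toEquiv ^ (k : ℤ)) v) := by
          intro v
          have : (φt.toEquiv ^ ((k : ℤ) + 1)) = φt.toEquiv * (φt.toEquiv ^ (k : ℤ)) := by
            rw [← zpow_one_add]; ring_nf
          rw [this, Equiv.Perm.mul_apply]; rfl
        rw [e, e]
        exact step _ _ ih.1 |>.imp id (fun hh => by omega)
    | pred k ih =>
        have e : ∀ v : Xt, (φt.toEquiv ^ (-(k : ℤ) - 1)) v = φt.symm ((φt.toEquiv ^ (-(k : ℤ))) v) := by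
          intro v
          have : (φt.toEquiv ^ (-(k : ℤ) - 1)) = φt.toEquiv⁻¹ * (φt.toEquiv ^ (-(k : ℤ))) := by
            rw [← zpow_neg_one, ← zpow_add]; ring_nf
          rw [this, Equiv.Perm.mul_apply]; rfl
        rw [e, e]
        exact step' _ _ ih.1 |>.imp id (fun hh => by omega)
  -- g locally constant near w₀: preimage of {g w₀} is open
  have hU : IsOpen (g ⁻¹' {g w₀}) := (isOpen_discrete ({g w₀} : Set ℤ)).preimage hg
  have hw₀U : w₀ ∈ g ⁻¹' {g w₀} := rfl
  -- find open S ∋ x₀ with π⁻¹ S ⊆ U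
  set U := g ⁻¹' {g w₀} with hUdef
  have hScompact : IsCompact (π '' Uᶜ) := (hU.isClosed_compl.isCompact).image hcont
  have hSclosed : IsClosed (π '' Uᶜ) := hScompact.isClosed
  have hx₀S : x₀ ∉ π '' Uᶜ := by
    rintro ⟨v, hv, hπv⟩
    have : v ∈ π ⁻¹' {x₀} := hπv
    rw [hfib] at this
    exact hv (this ▸ hw₀U)
  have hpre : π ⁻¹' (π '' Uᶜ)ᶜ ⊆ U := by
    intro v hv
    by_contra hvU
    exact hv ⟨v, hvU, rfl⟩
  -- main claim: g is constant on fibres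
  have key : ∀ w w' : Xt, π w = π w' → g w = g w' := by
    intro w w' h
    -- the open set π⁻¹((π '' Uᶜ)ᶜ) is nonempty (contains w₀)
    have hopen : IsOpen (π ⁻¹' (π '' Uᶜ)ᶜ) := hSclosed.isOpen_compl.preimage hcont
    have hne : (π ⁻¹' (π '' Uᶜ)ᶜ).Nonempty := ⟨w₀, by
      simp only [Set.mem_preimage]
      have : π w₀ = x₀ := by
        have : w₀ ∈ π ⁻¹' {x₀} := by rw [hfib]; rfl
        exact this
      rw [this]; exact hx₀S⟩
    obtain ⟨v, ⟨n, hn⟩, hvmem⟩ := (hmin w).exists_mem_open hopen hne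
    obtain ⟨hπn, hgn⟩ := iter w w' h n
    rw [hn] at hπn hgn
    have hvU : v ∈ U := hpre hvmem
    have hv'U : (φt.toEquiv ^ n) w' ∈ U := hpre (by
      simp only [Set.mem_preimage] at hvmem ⊢
      rw [← hπn]; exact hvmem)
    have h1 : g v = g w₀ := hvU
    have h2 : g ((φt.toEquiv ^ n) w') = g w₀ := hv'U
    omega
  -- construct g₀
  refine ⟨g ∘ Function.surjInv hsurj, ?_, ?_⟩
  · have hquot := (hcont.isClosedMap).isQuotientMap hcont hsurj
    rw [hquot.continuous_iff]
    have : (g ∘ Function.surjInv hsurj) ∘ π = g := by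
      funext w
      exact key _ _ (Function.surjInv_eq hsurj (π w))
    rw [this]; exact hg
  · funext w
    exact key _ _ (Function.surjInv_eq hsurj (π w)).symm
end
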